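/- Let α ≥ 2, m ≥ 1, μ > 0. If 0 ≤ p < 1 - (m/(αm - α + 1))^{1/(α-1)}, then μ_s(α) = ∑_{φ=α}^{αm} (αμ/(H_φ - H_{φ-α})) C(αm, φ)(1-p)^φ p^{αm-φ} is strictly greater than μ_s(1) = μm(1-p). -/

import Mathlib

lemma sum_binom (n : ℕ) (p q : ℝ) (h : q + p = 1) :
    ∑ φ ∈ Finset.range (n+1), (n.choose φ : ℝ) * q ^ φ * p ^ (n - φ) = 1 := by
  have h2 := add_pow q p n
  rw [h, one_pow] at h2
  rw [h2]
  exact Finset.sum_congr rfl (fun φ _ => by ring)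

lemma sum_binom_mean (n : ℕ) (p q : ℝ) (h : q + p = 1) :
    ∑ φ ∈ Finset.range (n+1), (φ : ℝ) * (n.choose φ : ℝ) * q ^ φ * p ^ (n - φ)
      = n * q := by
  cases n with
  | zero => simp
  | succ n' =>
    rw [Finset.sum_range_succ']
    simp only [Nat.cast_zero, zero_mul, add_zero]
    have key : ∀ j ∈ Finset.range (n' + 1),
        ((j+1 : ℕ) : ℝ) * ((n'+1).choose (j+1) : ℝ) * q ^ (j+1) * p ^ (n' + 1 - (j+1))
        = ((n'+1 : ℕ) : ℝ) * q * ((n'.choose j : ℝ) * q ^ j * p ^ (n' - j)) := by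
      intro j hj
      have hc : (n' + 1) * n'.choose j = (n'+1).choose (j+1) * (j+1) :=
        Nat.add_one_mul_choose_eq n' j
      have hc' : ((n'+1 : ℕ) : ℝ) * (n'.choose j : ℝ)
          = ((n'+1).choose (j+1) : ℝ) * ((j+1 : ℕ) : ℝ) := by
        exact_mod_cast congrArg (Nat.cast : ℕ → ℝ) hc
      have hnj : n' + 1 - (j + 1) = n' - j := by omega
      rw [hnj]
      push_cast at hc' ⊢
      linear_combination (q ^ (j+1) * p ^ (n' - j)) * hc'.symm
    rw [Finset.sum_congr rfl key, ← Finset.mul_sum, sum_binom n' p q h, mul_one]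

/-- The ℓ-th harmonic number H_ℓ = ∑_{i=1}^ℓ 1/i. -/
noncomputable def H (n : ℕ) : ℝ := ∑ i ∈ Finset.range n, 1 / (i + 1 : ℝ)

theorem prob_access_alpha_better_than_one (α m : ℕ) (μ p : ℝ)
    (hα : 2 ≤ α) (hm : 1 ≤ m) (hμ : 0 < μ)
    (hp0 : 0 ≤ p)
    (hp : p < 1 - ((m : ℝ) / ((α : ℝ) * m - α + 1)) ^ ((1 : ℝ) / ((α : ℝ) - 1))) :
    ∑ φ ∈ Finset.Icc α (α * m),
        (α * μ / (H φ - H (φ - α))) * ((α * m).choose φ : ℝ) * (1 - p) ^ φ * p ^ (α * m - φ) >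
      μ * m * (1 - p) := by
  set n := α * m with hn
  set q := 1 - p with hqdef
  have hqp : q + p = 1 := by rw [hqdef]; ring
  have hm1 : (1:ℝ) ≤ m := by exact_mod_cast hm
  have hα2 : (2:ℝ) ≤ α := by exact_mod_cast hα
  have hα1 : (0:ℝ) < (α:ℝ) - 1 := by linarith
  have hden : (0:ℝ) < (α:ℝ)*m - α + 1 := by nlinarith
  have hm0 : (0:ℝ) < m := by linarith
  have hx0 : (0:ℝ) < (m:ℝ)/((α:ℝ)*m - α + 1) := by positivity
  set t := ((m : ℝ) / ((α : ℝ) * m - α + 1)) ^ ((1 : ℝ) / ((α : ℝ) - 1)) with ht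
  have ht0 : 0 < t := Real.rpow_pos_of_pos hx0 _
  have hqt : t < q := by rw [hqdef]; linarith [hp]
  have hq0 : 0 < q := lt_trans ht0 hqt
  -- 1/m ≤ t
  have hcast : ((α - 1 : ℕ) : ℝ) = (α:ℝ) - 1 := by
    rw [Nat.cast_sub (by omega : 1 ≤ α)]; norm_num
  have hbase : (1/(m:ℝ)) ^ (α-1:ℕ) ≤ (m:ℝ)/((α:ℝ)*m - α + 1) := by
    rw [div_pow, one_pow, div_le_div_iff₀ (by positivity) hden]
    have hpow : (α:ℝ)*m - α + 1 ≤ (m:ℝ) ^ α := by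
      have hb := one_add_mul_le_pow (a := (m:ℝ) - 1) (by linarith) α
      calc (α:ℝ)*m - α + 1 = 1 + α * ((m:ℝ)-1) := by ring
        _ ≤ (1 + ((m:ℝ)-1)) ^ α := hb
        _ = (m:ℝ)^α := by ring_nf
    have hms : (m:ℝ) * (m:ℝ)^(α-1:ℕ) = (m:ℝ)^α := by
      rw [← pow_succ']
      congr 1
      omega
    linarith [hpow, hms]
  have h1m : 1/(m:ℝ) ≤ t := by
    have hz : (0:ℝ) ≤ 1/((α:ℝ)-1) := le_of_lt (by positivity)
    have h2 : ((1/(m:ℝ)) ^ (α-1:ℕ)) ^ ((1:ℝ)/((α:ℝ)-1)) ≤ t :=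
      Real.rpow_le_rpow (by positivity) hbase hz
    rwa [← Real.rpow_natCast (1/(m:ℝ)) (α-1), ← Real.rpow_mul (by positivity), hcast,
      mul_one_div, div_self (ne_of_gt hα1), Real.rpow_one] at h2
  have hmq : 1 < (m:ℝ) * q := by
    have : 1/(m:ℝ) < q := lt_of_le_of_lt h1m hqt
    calc (1:ℝ) = (m:ℝ) * (1/(m:ℝ)) := by field_simp
      _ < (m:ℝ) * q := by exact mul_lt_mul_of_pos_left this hm0
  -- the comparison function g
  set g : ℕ → ℝ := fun φ => μ * ((φ:ℝ) - α + 1) * ((n.choose φ : ℝ)) * q^φ * p^(n-φ) with hg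
  -- termwise bound on Icc
  have hterm : ∀ φ ∈ Finset.Icc α n, g φ ≤
      (α * μ / (H φ - H (φ - α))) * (n.choose φ : ℝ) * q ^ φ * p ^ (n - φ) := by
    intro φ hφ
    obtain ⟨hαφ, hφn⟩ := Finset.mem_Icc.mp hφ
    set k := φ - α with hk
    have hkφ : k < φ := by omega
    have hkcast : ((k:ℕ):ℝ) = (φ:ℝ) - α := by
      rw [hk, Nat.cast_sub hαφ]
    have hH : H φ - H k = ∑ i ∈ Finset.Ico k φ, 1/((i:ℝ)+1) := by
      rw [H, H]
      exact (Finset.sum_Ico_eq_sub _ (le_of_lt hkφ)).symm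
    have hHpos : 0 < H φ - H k := by
      rw [hH]
      exact Finset.sum_pos (fun i _ => by positivity)
        ⟨k, Finset.mem_Ico.mpr ⟨le_refl k, hkφ⟩⟩
    have hHle : H φ - H k ≤ α * (1/((k:ℝ)+1)) := by
      rw [hH]
      calc ∑ i ∈ Finset.Ico k φ, 1/((i:ℝ)+1)
          ≤ ∑ _i ∈ Finset.Ico k φ, 1/((k:ℝ)+1) := by
            apply Finset.sum_le_sum
            intro i hi
            have hki : (k:ℝ) ≤ i := by exact_mod_cast (Finset.mem_Ico.mp hi).1
            exact one_div_le_one_div_of_le (by positivity) (by linarith)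
        _ = ((Finset.Ico k φ).card : ℝ) * (1/((k:ℝ)+1)) := by
            rw [Finset.sum_const, nsmul_eq_mul]
        _ = α * (1/((k:ℝ)+1)) := by
            rw [Nat.card_Ico]
            congr 1
            have : φ - k = α := by omega
            exact_mod_cast congrArg (Nat.cast (R := ℝ)) this
    have hmain : μ * ((k:ℝ)+1) ≤ α * μ / (H φ - H k) := by
      rw [le_div_iff₀ hHpos]
      have hk1 : (0:ℝ) < (k:ℝ)+1 := by positivity
      calc μ * ((k:ℝ)+1) * (H φ - H k)
          ≤ μ * ((k:ℝ)+1) * ((α:ℝ) * (1/((k:ℝ)+1))) := by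
            apply mul_le_mul_of_nonneg_left hHle (by positivity)
        _ = (α:ℝ) * μ := by field_simp
    have hnn : (0:ℝ) ≤ (n.choose φ : ℝ) * q^φ * p^(n-φ) := by positivity
    calc g φ = (μ * ((k:ℝ)+1)) * ((n.choose φ : ℝ) * q^φ * p^(n-φ)) := by
          rw [hg]; simp only []; rw [hkcast]; ring
      _ ≤ (α * μ / (H φ - H k)) * ((n.choose φ : ℝ) * q^φ * p^(n-φ)) :=
          mul_le_mul_of_nonneg_right hmain hnn
      _ = (α * μ / (H φ - H (φ - α))) * (n.choose φ : ℝ) * q ^ φ * p ^ (n - φ) := by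
          rw [← hk]; ring
  have hsub : Finset.Icc α n ⊆ Finset.range (n+1) := by
    intro x hx
    rw [Finset.mem_Icc] at hx
    rw [Finset.mem_range]
    omega
  have step2 : ∑ φ ∈ Finset.range (n+1), g φ ≤ ∑ φ ∈ Finset.Icc α n, g φ := by
    rw [← Finset.sum_sdiff hsub]
    have hneg : ∑ φ ∈ Finset.range (n+1) \ Finset.Icc α n, g φ ≤ 0 := by
      apply Finset.sum_nonpos
      intro φ hφ
      rw [Finset.mem_sdiff, Finset.mem_range, Finset.mem_Icc] at hφ
      have hφα : φ < α := by omega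
      have h1 : (φ:ℝ) - α + 1 ≤ 0 := by
        have : (φ:ℝ) + 1 ≤ α := by exact_mod_cast hφα
        linarith
      have h2 : (0:ℝ) ≤ (n.choose φ : ℝ) * q^φ * p^(n-φ) := by positivity
      calc g φ = (μ * ((φ:ℝ) - α + 1)) * ((n.choose φ : ℝ) * q^φ * p^(n-φ)) := by
            simp only [hg]; ring
        _ ≤ 0 := mul_nonpos_of_nonpos_of_nonneg (by nlinarith) h2
    linarith
  have step3 : ∑ φ ∈ Finset.range (n+1), g φ = μ * ((α:ℝ) * m * q) - μ * ((α:ℝ)-1) := by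
    have hsplit : ∀ φ ∈ Finset.range (n+1), g φ =
        μ * ((φ:ℝ) * (n.choose φ : ℝ) * q^φ * p^(n-φ))
          - (μ * ((α:ℝ)-1)) * ((n.choose φ : ℝ) * q^φ * p^(n-φ)) := by
      intro φ _
      rw [hg]; ring
    rw [Finset.sum_congr rfl hsplit, Finset.sum_sub_distrib, ← Finset.mul_sum,
      ← Finset.mul_sum, sum_binom n p q hqp, sum_binom_mean n p q hqp, mul_one]
    rw [show ((n:ℕ):ℝ) = (α:ℝ) * m from by rw [hn]; push_cast; ring]
  have step1 : ∑ φ ∈ Finset.Icc α n, g φ ≤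
      ∑ φ ∈ Finset.Icc α n,
        (α * μ / (H φ - H (φ - α))) * (n.choose φ : ℝ) * q ^ φ * p ^ (n - φ) :=
    Finset.sum_le_sum hterm
  have step4 : μ * m * q < μ * ((α:ℝ) * m * q) - μ * ((α:ℝ)-1) := by
    nlinarith [mul_pos hμ (mul_pos hα1 (show (0:ℝ) < (m:ℝ)*q - 1 by linarith))]
  calc μ * m * q < μ * ((α:ℝ) * m * q) - μ * ((α:ℝ)-1) := step4
    _ = ∑ φ ∈ Finset.range (n+1), g φ := step3.symm
    _ ≤ ∑ φ ∈ Finset.Icc α n, g φ := step2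
    _ ≤ _ := step1
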